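/- Let X be a Banach space, V ⊆ X* a closed subspace that separates points of X and is norming (‖x‖ = sup { |ρ(x)| : ρ ∈ V, ‖ρ‖ ≤ 1 } for all x). Then the natural map ι : X → V* is an isometry, and X (identified with ι(X)) is reflexive relative to V—i.e. ι is surjective—if and only if the closed unit ball of X is compact in the σ(X, V)-topology. -/

import Mathlib

open Filter Topology Set

set_option synthInstance.maxHeartbeats 1000000
set_option maxHeartbeats 2000000

@[reducible] noncomputable def subCLMNormedAddCommGroup {X : Type*} [NormedAddCommGroup X] [NormedSpace ℂ X]
    (V : Submodule ℂ (X →L[ℂ] ℂ)) : NormedAddCommGroup ↥V := Submodule.normedAddCommGroup V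

@[reducible] noncomputable def subCLMNormedSpace {X : Type*} [NormedAddCommGroup X] [NormedSpace ℂ X]
    (V : Submodule ℂ (X →L[ℂ] ℂ)) : NormedSpace ℂ ↥V := Submodule.normedSpace V

section
attribute [local instance] subCLMNormedAddCommGroup subCLMNormedSpace

/-- Helly-type lemma: finitely many constraints from a functional on `V` can be realized
by an element of `X` of norm at most `t` for any `t > ‖f‖`. -/
lemma helly_aux {X : Type*} [NormedAddCommGroup X] [NormedSpace ℂ X]
    (V : Submodule ℂ (X →L[ℂ] ℂ)) (f : StrongDual ℂ ↥V)
    {ι : Type*} [Fintype ι] (ρ : ι → ↥V) {t : ℝ} (ht : ‖f‖ < t) :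
    ∃ x : X, ‖x‖ ≤ t ∧ ∀ i, ((ρ i : X →L[ℂ] ℂ) x = f (ρ i)) := by
  classical
  set L : ι → X →ₗ[ℂ] ℂ := fun i => ((ρ i : X →L[ℂ] ℂ) : X →ₗ[ℂ] ℂ) with hL
  set c : ι → ℂ := fun i => f (ρ i) with hc
  -- Step A: find x₀ with L i x₀ = c i for all i.
  have hstepA : ∃ x₀ : X, ∀ i, L i x₀ = c i := by
    by_contra h
    push_neg at h
    set T : X →ₗ[ℂ] (ι → ℂ) := LinearMap.pi L with hT
    have hcnot : c ∉ LinearMap.range T := by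
      rintro ⟨x₀, hx₀⟩
      obtain ⟨i, hi⟩ := h x₀
      exact hi (congrFun hx₀ i)
    -- get a functional on (ι → ℂ) vanishing on range T but not at c
    set p := LinearMap.range T with hp
    have hmkne : (Submodule.Quotient.mk c : (ι → ℂ) ⧸ p) ≠ 0 := by
      simpa [Submodule.Quotient.mk_eq_zero] using hcnot
    obtain ⟨ψ, hψ⟩ : ∃ ψ : Module.Dual ℂ ((ι → ℂ) ⧸ p),
        ψ (Submodule.Quotient.mk c) ≠ 0 := by
      by_contra hall
      push_neg at hall
      exact hmkne ((Module.forall_dual_apply_eq_zero_iff ℂ _).1 hall)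
    set φ : Module.Dual ℂ (ι → ℂ) := ψ.comp p.mkQ with hφ
    have hφrange : ∀ x : X, φ (T x) = 0 := by
      intro x
      have : (Submodule.Quotient.mk (T x) : (ι → ℂ) ⧸ p) = 0 := by
        simpa [Submodule.Quotient.mk_eq_zero] using ⟨x, rfl⟩
      simp only [hφ, LinearMap.comp_apply]
      simpa [Submodule.mkQ_apply] using congrArg ψ this
    have hφc : φ c ≠ 0 := hψ
    set a : ι → ℂ := fun i => φ (fun j => if i = j then 1 else 0) with ha
    have hφeval : ∀ v : ι → ℂ, φ v = ∑ i, v i * a i := by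
      intro v
      conv_lhs => rw [pi_eq_sum_univ v]
      rw [map_sum]
      refine Finset.sum_congr rfl fun i _ => ?_
      rw [map_smul]
      simp [ha, smul_eq_mul]
    set w : ↥V := ∑ i, a i • ρ i with hw
    have hwzero : w = 0 := by
      have hcoe : ((w : X →L[ℂ] ℂ)) = 0 := by
        ext x
        have : φ (T x) = ∑ i, (L i x) * a i := by
          rw [hφeval]; rfl
        have h0 : ∑ i, (L i x) * a i = 0 := by rw [← this, hφrange]
        simp only [hw]
        push_cast [Submodule.coe_sum]
        simp only [ContinuousLinearMap.coe_sum', Finset.sum_apply,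
          ContinuousLinearMap.coe_smul', Pi.smul_apply, smul_eq_mul]
        simp only [ContinuousLinearMap.zero_apply, Pi.zero_apply]
        rw [← h0]
        exact Finset.sum_congr rfl fun i _ => mul_comm _ _
      exact Subtype.ext hcoe
    have : f w = φ c := by
      rw [hw, map_sum, hφeval]
      refine Finset.sum_congr rfl fun i _ => ?_
      rw [map_smul]
      simp [hc, smul_eq_mul, mul_comm]
    rw [hwzero, map_zero] at this
    exact hφc this.symm
  obtain ⟨x₀, hx₀⟩ := hstepA
  have hf0 : 0 ≤ ‖f‖ := norm_nonneg f
  set N : Submodule ℂ X := ⨅ i, LinearMap.ker (L i) with hN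
  have hNclosed : IsClosed (N : Set X) := by
    have h1 : (N : Set X) = ⋂ i, (LinearMap.ker (L i) : Set X) := by
      simp [hN]
    rw [h1]
    refine isClosed_iInter fun i => ?_
    have h2 : (LinearMap.ker (L i) : Set X) = {x | (ρ i : X →L[ℂ] ℂ) x = 0} := by
      ext x; simp [LinearMap.mem_ker, hL]
    rw [h2]
    exact isClosed_eq (ρ i : X →L[ℂ] ℂ).continuous continuous_const
  haveI := hNclosed
  by_cases hq0 : (Submodule.Quotient.mk x₀ : X ⧸ N) = 0
  · have hx₀N : x₀ ∈ N := (Submodule.Quotient.mk_eq_zero N).1 hq0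
    refine ⟨0, by simpa using le_of_lt (lt_of_le_of_lt hf0 ht), fun i => ?_⟩
    have hLi0 : L i x₀ = 0 := by
      have := (Submodule.mem_iInf _).1 hx₀N i
      simpa [LinearMap.mem_ker] using this
    have hci : c i = 0 := (hx₀ i).symm.trans hLi0
    rw [hc] at hci
    simp only at hci
    simp [hci]
  · set q : X ⧸ N := Submodule.Quotient.mk x₀ with hqdef
    obtain ⟨g, hg1, hgq⟩ := exists_dual_vector ℂ q (norm_ne_zero_iff.mpr hq0)
    set mkC : X →L[ℂ] X ⧸ N := LinearMap.mkContinuous N.mkQ 1 (fun x => by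
      simpa using Submodule.Quotient.norm_mk_le N x) with hmkC
    set φ : X →L[ℂ] ℂ := g.comp mkC with hφ
    have hφnorm : ‖φ‖ ≤ 1 := by
      refine ContinuousLinearMap.opNorm_le_bound _ zero_le_one fun x => ?_
      calc ‖φ x‖ ≤ ‖g‖ * ‖mkC x‖ := g.le_opNorm _
        _ ≤ 1 * ‖x‖ := by
            rw [hg1, one_mul, one_mul]
            exact Submodule.Quotient.norm_mk_le N x
    have hmkCapp : ∀ x : X, mkC x = Submodule.Quotient.mk x := fun x => rfl
    have hker : ⨅ i, LinearMap.ker (L i) ≤ LinearMap.ker (φ : X →ₗ[ℂ] ℂ) := by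
      intro x hx
      have hx0 : (Submodule.Quotient.mk x : X ⧸ N) = 0 :=
        (Submodule.Quotient.mk_eq_zero N).2 hx
      have : φ x = 0 := by
        rw [hφ]
        simp only [ContinuousLinearMap.comp_apply, hmkCapp, hx0, map_zero]
      simpa [LinearMap.mem_ker] using this
    obtain ⟨a, ha2⟩ := (Submodule.mem_span_range_iff_exists_fun ℂ).1 (mem_span_of_iInf_ker_le_ker hker)
    set w : ↥V := ∑ i, a i • ρ i with hw
    have hwcoe : ((w : X →L[ℂ] ℂ)) = φ := by
      apply ContinuousLinearMap.coe_injective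
      rw [← ha2]
      ext x
      simp only [hw]
      push_cast [Submodule.coe_sum]
      simp only [ContinuousLinearMap.coe_sum', Finset.sum_apply,
        ContinuousLinearMap.coe_smul', Pi.smul_apply, smul_eq_mul,
        LinearMap.coe_sum, LinearMap.smul_apply]
      rfl
    have hwnorm : ‖w‖ ≤ 1 := by
      have : ‖w‖ = ‖(w : X →L[ℂ] ℂ)‖ := rfl
      rw [this, hwcoe]; exact hφnorm
    have hφx₀ : φ x₀ = (‖q‖ : ℂ) := by
      rw [hφ]
      simp only [ContinuousLinearMap.comp_apply, hmkCapp]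
      exact hgq
    have hfw : f w = (‖q‖ : ℂ) := by
      have h3 : f w = ∑ i, a i • (L i x₀) := by
        rw [hw, map_sum]
        refine Finset.sum_congr rfl fun i _ => ?_
        rw [map_smul, hx₀ i]
      have h4 : (∑ i, a i • L i) x₀ = ∑ i, a i • (L i x₀) := by
        simp [LinearMap.sum_apply]
      rw [h3, ← h4, ha2, ← hφx₀]
      rfl
    have hqle : ‖q‖ ≤ ‖f‖ := by
      have : ‖f w‖ = ‖q‖ := by rw [hfw]; simp [abs_of_nonneg (norm_nonneg q)]
      calc ‖q‖ = ‖f w‖ := this.symm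
        _ ≤ ‖f‖ * ‖w‖ := f.le_opNorm w
        _ ≤ ‖f‖ * 1 := by exact mul_le_mul_of_nonneg_left hwnorm hf0
        _ = ‖f‖ := mul_one _
    obtain ⟨m, hm_mk, hm_norm⟩ := Submodule.Quotient.norm_mk_lt q (show (0:ℝ) < t - ‖f‖ by linarith)
    refine ⟨m, by linarith, fun i => ?_⟩
    have hmem : m - x₀ ∈ N := by
      rw [← Submodule.Quotient.mk_eq_zero N]
      have : (Submodule.Quotient.mk m : X ⧸ N) = Submodule.Quotient.mk x₀ := hm_mk
      rw [show m - x₀ = m - x₀ from rfl, Submodule.Quotient.mk_sub, this, sub_self]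
    have hLm : L i m = L i x₀ := by
      have := (Submodule.mem_iInf _).1 hmem i
      have h5 : L i (m - x₀) = 0 := by simpa [LinearMap.mem_ker] using this
      have := sub_eq_zero.1 (by simpa [map_sub] using h5)
      exact this
    have hfin : L i m = c i := hLm.trans (hx₀ i)
    rw [hc] at hfin
    simp only at hfin
    simpa [hL] using hfin

end

/-- Let `X` be a Banach space and `V ⊆ X*` a closed subspace which separates
points and is norming.  Then the natural map `ι : X → V*`, `ι(x)(ρ) = ρ(x)`, is an isometry,
and `ι` is surjective (`X` is reflexive relative to `V`) if and only if the closed unit ball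
of `X` is compact in the weak topology `σ(X,V)` induced by `V`. -/
theorem stmt_16 {X : Type*} [NormedAddCommGroup X] [NormedSpace ℂ X] [CompleteSpace X]
    (V : Submodule ℂ (X →L[ℂ] ℂ)) (hVclosed : IsClosed (V : Set (X →L[ℂ] ℂ)))
    (hsep : ∀ x : X, (∀ ρ ∈ V, ρ x = 0) → x = 0)
    (hnorming : ∀ x : X, ‖x‖ = sSup {r : ℝ | ∃ ρ ∈ V, ‖ρ‖ ≤ 1 ∧ r = ‖ρ x‖})
    (ι : X →ₗ[ℂ] StrongDual ℂ ↥V)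
    (hι : ∀ (x : X) (ρ : ↥V), ι x ρ = (ρ : X →L[ℂ] ℂ) x) :
    (∀ x, @norm (StrongDual ℂ ↥V) (@ContinuousLinearMap.hasOpNorm ℂ ℂ ↥V ℂ _ _ _ _ _ _ (RingHom.id ℂ)) (ι x) = ‖x‖) ∧
      (Function.Surjective ι ↔
        @IsCompact X
          (TopologicalSpace.induced (fun (x : X) (ρ : ↥V) => (ρ : X →L[ℂ] ℂ) x)
            Pi.topologicalSpace)
          {x : X | ‖x‖ ≤ 1}) := by
    classical
  letI := subCLMNormedAddCommGroup V
  letI := subCLMNormedSpace V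
  -- Part 1: isometry
  have hisom : ∀ x, ‖ι x‖ = ‖x‖ := by
    intro x
    refine le_antisymm ?_ ?_
    · refine ContinuousLinearMap.opNorm_le_bound _ (norm_nonneg x) fun ρ => ?_
      rw [hι, mul_comm]
      exact (ρ : X →L[ℂ] ℂ).le_opNorm x
    · rw [hnorming x]
      refine Real.sSup_le ?_ (norm_nonneg _)
      rintro r ⟨ρ, hρV, hρ1, rfl⟩
      have h1 : ‖(ι x) ⟨ρ, hρV⟩‖ ≤ ‖ι x‖ := by
        calc ‖(ι x) ⟨ρ, hρV⟩‖ ≤ ‖ι x‖ * ‖(⟨ρ, hρV⟩ : ↥V)‖ := (ι x).le_opNorm _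
          _ ≤ ‖ι x‖ * 1 := mul_le_mul_of_nonneg_left hρ1 (norm_nonneg _)
          _ = ‖ι x‖ := mul_one _
      rwa [hι] at h1
  refine ⟨hisom, ?_⟩
  -- Setup: the weak topology as an induced topology from the weak-* dual
  set τ : TopologicalSpace X :=
    TopologicalSpace.induced (fun (x : X) (ρ : ↥V) => (ρ : X →L[ℂ] ℂ) x)
      Pi.topologicalSpace with hτ
  set e : X → WeakDual ℂ ↥V := fun x => ι x with he
  have hind : @Topology.IsInducing X (WeakDual ℂ ↥V) τ _ e := by
    refine ⟨?_⟩
    show τ = TopologicalSpace.induced e (WeakBilin.instTopologicalSpace _)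
    rw [hτ]
    show TopologicalSpace.induced _ _
      = TopologicalSpace.induced e (TopologicalSpace.induced
          (fun (g : WeakDual ℂ ↥V) (ρ : ↥V) => topDualPairing ℂ ↥V g ρ) Pi.topologicalSpace)
    rw [induced_compose]
    congr 1
    funext x ρ
    exact (hι x ρ).symm
  set B : Set X := {x : X | ‖x‖ ≤ 1} with hB
  rw [show (@IsCompact X τ B) = (@IsCompact X τ {x : X | ‖x‖ ≤ 1}) from rfl]
  rw [← hB]
  rw [hind.isCompact_iff]
  constructor
  · -- surjective → compact
    intro hsurj
    have himg : e '' B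
        = WeakDual.toStrongDual (𝕜 := ℂ) (E := ↥V) ⁻¹' Metric.closedBall 0 1 := by
      ext g
      simp only [Set.mem_image, Set.mem_preimage, Metric.mem_closedBall, dist_zero_right]
      constructor
      · rintro ⟨x, hx, rfl⟩
        show ‖ι x‖ ≤ 1
        rw [hisom x]; exact hx
      · intro hg
        obtain ⟨x, rfl⟩ := hsurj (WeakDual.toStrongDual g)
        refine ⟨x, ?_, rfl⟩
        show ‖x‖ ≤ 1
        rw [← hisom x]
        exact hg
    rw [himg]
    exact WeakDual.isCompact_closedBall (𝕜 := ℂ) (E := ↥V) 0 1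
  · -- compact → surjective
    intro hcpt
    have hsmall : ∀ g : StrongDual ℂ ↥V, ‖g‖ < 1 → ∃ x, ι x = g := by
      intro g hg
      set Z : ↥V → Set (WeakDual ℂ ↥V) := fun ρ => {g' | g' ρ = g ρ} with hZ
      have hZclosed : ∀ ρ, IsClosed (Z ρ) :=
        fun ρ => isClosed_eq (WeakDual.eval_continuous ρ) continuous_const
      have hFIP : ∀ s : Finset ↥V, (e '' B ∩ ⋂ ρ ∈ s, Z ρ).Nonempty := by
        intro s
        obtain ⟨x, hx1, hx2⟩ := helly_aux V g (fun ρ : ↥(s : Set ↥V) => (ρ : ↥V)) hg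
        refine ⟨e x, ⟨x, hx1, rfl⟩, ?_⟩
        rw [Set.mem_iInter₂]
        intro ρ hρ
        show (e x) ρ = g ρ
        rw [show (e x) ρ = (ι x) ρ from rfl, hι]
        exact hx2 ⟨ρ, hρ⟩
      obtain ⟨g', hg'K, hg'Z⟩ := hcpt.inter_iInter_nonempty Z hZclosed hFIP
      obtain ⟨x, hxB, rfl⟩ := hg'K
      refine ⟨x, ?_⟩
      refine ContinuousLinearMap.ext fun ρ => ?_
      have := Set.mem_iInter.1 hg'Z ρ
      exact this
    intro f
    set r : ℝ := ‖f‖ + 1 with hr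
    have hrpos : 0 < r := by positivity
    have hrne : (r : ℂ) ≠ 0 := by exact_mod_cast ne_of_gt hrpos
    set g : StrongDual ℂ ↥V := (r : ℂ)⁻¹ • f with hg
    have hgnorm : ‖g‖ < 1 := by
      rw [hg, norm_smul, norm_inv, Complex.norm_real, Real.norm_of_nonneg hrpos.le]
      have hlt : ‖f‖ < r := by rw [hr]; linarith
      calc r⁻¹ * ‖f‖ < r⁻¹ * r := by
            exact mul_lt_mul_of_pos_left hlt (by positivity)
        _ = 1 := inv_mul_cancel₀ (ne_of_gt hrpos)
    obtain ⟨x, hx⟩ := hsmall g hgnorm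
    exact ⟨(r : ℂ) • x, by rw [map_smul, hx, hg, smul_smul, mul_inv_cancel₀ hrne, one_smul]⟩
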